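/- arXiv:1503.00037 — 2 statements merged into one kernel-verified Lean document; each statement's English description precedes it below -/
import Mathlib

section
/- The function u(x) = 2·ln(((e^{u₀/2}+1)·e^{√2·x} + (e^{u₀/2}-1)) / ((e^{u₀/2}+1)·e^{√2·x} - (e^{u₀/2}-1))) satisfies the differential equation u''(x) = 2·sinh(u(x)) for all x > 0, for every u₀ > 0. -/
open Real Filter

lemma colloid_key (a b : ℝ) (ha : 0 < a) (hb : 0 < b) (hab : b < a) :
    ∀ x : ℝ, 0 < x →
      deriv (deriv (fun y : ℝ =>
        2 * Real.log ((a * Real.exp (Real.sqrt 2 * y) + b) /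
          (a * Real.exp (Real.sqrt 2 * y) - b)))) x
      = 2 * Real.sinh (2 * Real.log ((a * Real.exp (Real.sqrt 2 * x) + b) /
          (a * Real.exp (Real.sqrt 2 * x) - b))) := by
  intro x hx
  set s := Real.sqrt 2 with hs_def
  have hs : 0 < s := Real.sqrt_pos.mpr (by norm_num)
  have hs2 : s * s = 2 := Real.mul_self_sqrt (by norm_num)
  have hE : ∀ y : ℝ, HasDerivAt (fun z : ℝ => Real.exp (s * z)) (s * Real.exp (s * y)) y := by
    intro y
    have h1 : HasDerivAt (fun z : ℝ => s * z) s y := by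
      simpa using (hasDerivAt_id y).const_mul s
    have h2 := (Real.hasDerivAt_exp (s * y)).comp y h1
    exact mul_comm (Real.exp (s * y)) s ▸ h2
  have hD : ∀ y : ℝ, 0 < y → 0 < a * Real.exp (s * y) - b := by
    intro y hy
    have h1 : (1:ℝ) < Real.exp (s * y) := by
      have h2 : 0 < s * y := mul_pos hs hy
      calc (1:ℝ) = Real.exp 0 := by simp
        _ < Real.exp (s * y) := Real.exp_lt_exp.mpr h2
    nlinarith
  have hN : ∀ y : ℝ, 0 < y → 0 < a * Real.exp (s * y) + b := by
    intro y hy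
    have := Real.exp_pos (s * y); nlinarith
  set g : ℝ → ℝ := fun y =>
    2 * (a * (s * Real.exp (s * y)) / (a * Real.exp (s * y) + b)
       - a * (s * Real.exp (s * y)) / (a * Real.exp (s * y) - b)) with hg_def
  have hv : ∀ y : ℝ, 0 < y →
      HasDerivAt (fun z : ℝ => 2 * (Real.log (a * Real.exp (s * z) + b)
        - Real.log (a * Real.exp (s * z) - b))) (g y) y := by
    intro y hy
    have h1 : HasDerivAt (fun z : ℝ => a * Real.exp (s * z) + b)
        (a * (s * Real.exp (s * y))) y := ((hE y).const_mul a).add_const b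
    have h2 : HasDerivAt (fun z : ℝ => a * Real.exp (s * z) - b)
        (a * (s * Real.exp (s * y))) y := ((hE y).const_mul a).sub_const b
    have h3 := h1.log (hN y hy).ne'
    have h4 := h2.log (hD y hy).ne'
    have h5 := (h3.sub h4).const_mul 2
    exact h5
  have hmem : ∀ y : ℝ, 0 < y → Set.Ioi (0:ℝ) ∈ nhds y := fun y hy =>
    isOpen_Ioi.mem_nhds hy
  have huv : ∀ y : ℝ, 0 < y →
      (fun z : ℝ => 2 * Real.log ((a * Real.exp (s * z) + b) /
        (a * Real.exp (s * z) - b))) =ᶠ[nhds y]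
      (fun z : ℝ => 2 * (Real.log (a * Real.exp (s * z) + b)
        - Real.log (a * Real.exp (s * z) - b))) := by
    intro y hy
    filter_upwards [hmem y hy] with z hz
    rw [Real.log_div (hN z hz).ne' (hD z hz).ne']
  have hdu : ∀ y : ℝ, 0 < y →
      deriv (fun z : ℝ => 2 * Real.log ((a * Real.exp (s * z) + b) /
        (a * Real.exp (s * z) - b))) y = g y := by
    intro y hy
    rw [(huv y hy).deriv_eq, (hv y hy).deriv]
  have hdd : deriv (fun z : ℝ => 2 * Real.log ((a * Real.exp (s * z) + b) /
        (a * Real.exp (s * z) - b))) =ᶠ[nhds x] g := by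
    filter_upwards [hmem x hx] with y hy
    exact hdu y hy
  rw [hdd.deriv_eq]
  -- now compute deriv g x
  have hNx := hN x hx
  have hDx := hD x hx
  set E := Real.exp (s * x) with hE_def
  have hp : HasDerivAt (fun z : ℝ => a * (s * Real.exp (s * z)) / (a * Real.exp (s * z) + b))
      ((a * (s * (s * E)) * (a * E + b) - a * (s * E) * (a * (s * E))) / (a * E + b)^2) x := by
    have hnum : HasDerivAt (fun z : ℝ => a * (s * Real.exp (s * z))) (a * (s * (s * E))) x :=
      ((hE x).const_mul s).const_mul a
    have hden : HasDerivAt (fun z : ℝ => a * Real.exp (s * z) + b)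
        (a * (s * E)) x := ((hE x).const_mul a).add_const b
    exact hnum.div hden hNx.ne'
  have hq : HasDerivAt (fun z : ℝ => a * (s * Real.exp (s * z)) / (a * Real.exp (s * z) - b))
      ((a * (s * (s * E)) * (a * E - b) - a * (s * E) * (a * (s * E))) / (a * E - b)^2) x := by
    have hnum : HasDerivAt (fun z : ℝ => a * (s * Real.exp (s * z))) (a * (s * (s * E))) x :=
      ((hE x).const_mul s).const_mul a
    have hden : HasDerivAt (fun z : ℝ => a * Real.exp (s * z) - b)
        (a * (s * E)) x := ((hE x).const_mul a).sub_const b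
    exact hnum.div hden hDx.ne'
  have hg' : HasDerivAt g
      (2 * ((a * (s * (s * E)) * (a * E + b) - a * (s * E) * (a * (s * E))) / (a * E + b)^2
        - (a * (s * (s * E)) * (a * E - b) - a * (s * E) * (a * (s * E))) / (a * E - b)^2)) x :=
    (hp.sub hq).const_mul 2
  rw [hg'.deriv]
  -- RHS: expand sinh
  have hr : (0:ℝ) < (a * E + b) / (a * E - b) := div_pos hNx hDx
  have hexp : Real.exp (2 * Real.log ((a * E + b) / (a * E - b)))
      = ((a * E + b) / (a * E - b))^2 := by
    rw [two_mul, Real.exp_add, Real.exp_log hr, sq]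
  rw [Real.sinh_eq, hexp, Real.exp_neg, hexp]
  have hEpos : (0:ℝ) < E := Real.exp_pos _
  have key : s * (s * E) = 2 * E := by rw [← mul_assoc, hs2]
  rw [key, show a * (s * E) * (a * (s * E)) = a * E * (a * E) * (s * s) from by ring, hs2]
  field_simp
  ring

/-- The exact colloid solution satisfies u'' = 2·sinh(u) on (0,∞). -/
theorem colloid_exact_solution_ode (u₀ : ℝ) (h : 0 < u₀) :
    ∀ x : ℝ, 0 < x →
      deriv (deriv (fun y : ℝ =>
        2 * Real.log (((Real.exp (u₀/2) + 1) * Real.exp (Real.sqrt 2 * y) + (Real.exp (u₀/2) - 1)) /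
          ((Real.exp (u₀/2) + 1) * Real.exp (Real.sqrt 2 * y) - (Real.exp (u₀/2) - 1))))) x
      = 2 * Real.sinh
          (2 * Real.log (((Real.exp (u₀/2) + 1) * Real.exp (Real.sqrt 2 * x) + (Real.exp (u₀/2) - 1)) /
            ((Real.exp (u₀/2) + 1) * Real.exp (Real.sqrt 2 * x) - (Real.exp (u₀/2) - 1)))) := by
  have h1 : (1:ℝ) < Real.exp (u₀/2) := by
    calc (1:ℝ) = Real.exp 0 := by simp
      _ < Real.exp (u₀/2) := Real.exp_lt_exp.mpr (by linarith)
  exact colloid_key (Real.exp (u₀/2) + 1) (Real.exp (u₀/2) - 1)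
    (by linarith) (by linarith) (by linarith)
end

section
/- The derivative at the origin of the exact colloid solution satisfies u'(0) = -2·√(cosh(u₀) - 1) for every u₀ > 0. -/
/-- The right derivative at 0 of the exact colloid solution equals -2·√(cosh u₀ - 1). -/
theorem colloid_exact_solution_deriv_at_zero (u₀ : ℝ) (h : 0 < u₀) :
    derivWithin (fun x : ℝ =>
      2 * Real.log (((Real.exp (u₀/2) + 1) * Real.exp (Real.sqrt 2 * x) + (Real.exp (u₀/2) - 1)) /
        ((Real.exp (u₀/2) + 1) * Real.exp (Real.sqrt 2 * x) - (Real.exp (u₀/2) - 1))))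
      (Set.Ici 0) 0 = -2 * Real.sqrt (Real.cosh u₀ - 1) := by
  set c := Real.exp (u₀/2) with hc
  have hc1 : 1 < c := by
    rw [hc]
    have : (0:ℝ) < u₀ / 2 := by linarith
    calc (1:ℝ) = Real.exp 0 := by simp
    _ < Real.exp (u₀/2) := Real.exp_lt_exp.2 this
  have hcpos : (0:ℝ) < c := by linarith
  have hE : HasDerivAt (fun x : ℝ => Real.exp (Real.sqrt 2 * x)) (Real.sqrt 2) 0 := by
    have h1 : HasDerivAt (fun x : ℝ => Real.sqrt 2 * x) (Real.sqrt 2) 0 := by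
      simpa using (hasDerivAt_id (0:ℝ)).const_mul (Real.sqrt 2)
    simpa using h1.exp
  have hN : HasDerivAt (fun x : ℝ => (c + 1) * Real.exp (Real.sqrt 2 * x) + (c - 1))
      ((c + 1) * Real.sqrt 2) 0 := (hE.const_mul (c + 1)).add_const _
  have hD : HasDerivAt (fun x : ℝ => (c + 1) * Real.exp (Real.sqrt 2 * x) - (c - 1))
      ((c + 1) * Real.sqrt 2) 0 := (hE.const_mul (c + 1)).sub_const _
  have hD0 : (c + 1) * Real.exp (Real.sqrt 2 * 0) - (c - 1) ≠ 0 := by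
    simp only [mul_zero, Real.exp_zero, mul_one]
    linarith
  have hQ := hN.div hD hD0
  have hQ0 : ((c + 1) * Real.exp (Real.sqrt 2 * 0) + (c - 1)) /
      ((c + 1) * Real.exp (Real.sqrt 2 * 0) - (c - 1)) ≠ 0 := by
    simp only [mul_zero, Real.exp_zero, mul_one]
    have hnum : (c + 1) + (c - 1) = 2 * c := by ring
    have hden : (c + 1) - (c - 1) = 2 := by ring
    rw [hnum, hden]
    positivity
  have hL := ((Real.hasDerivAt_log hQ0).comp 0 hQ).const_mul 2
  have hUD : UniqueDiffWithinAt ℝ (Set.Ici (0:ℝ)) 0 :=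
    uniqueDiffOn_Ici 0 0 Set.self_mem_Ici
  have hL' := hL
  simp only [Function.comp, Pi.div_apply] at hL'
  rw [(hL'.hasDerivWithinAt).derivWithin hUD]
  -- now an algebraic identity
  have hsq : Real.sqrt (Real.cosh u₀ - 1) = Real.sqrt 2 / 2 * (c - 1/c) := by
    have hcosh : Real.cosh u₀ - 1 = (Real.sqrt 2 / 2 * (c - 1/c))^2 := by
      have h2 : (Real.sqrt 2)^2 = 2 := Real.sq_sqrt (by norm_num)
      have hcc : c * c = Real.exp u₀ := by
        rw [hc, ← Real.exp_add]; ring_nf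
      have hinv : Real.exp (-u₀) = 1 / (c * c) := by
        rw [hcc, Real.exp_neg]; simp [one_div]
      rw [Real.cosh_eq, hinv, ← hcc]
      have hc0 : c ≠ 0 := ne_of_gt hcpos
      field_simp
      ring_nf
      rw [h2]
      ring
    rw [hcosh, Real.sqrt_sq]
    have : 1/c < 1 := by
      rw [div_lt_one hcpos]; linarith
    have h2 : (0:ℝ) < Real.sqrt 2 := Real.sqrt_pos.2 (by norm_num)
    nlinarith
  rw [hsq]
  simp only [mul_zero, Real.exp_zero, mul_one, Function.comp]
  have hden2 : (c + 1) - (c - 1) = 2 := by ring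
  have hnum2 : (c + 1) + (c - 1) = 2 * c := by ring
  field_simp
  ring_nf
  have hc0' : c ≠ 0 := ne_of_gt hcpos
  linear_combination (2 - 2 * c ^ 2) * (mul_inv_cancel₀ hc0')
end
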